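/- Let k be an algebraically closed field of characteristic zero, V a finite-dimensional k-vector space with a nondegenerate alternating bilinear form B (so B(w,v) = −B(v,w)), and e ∈ End(V) a nilpotent endomorphism satisfying B(e·v, w) = B(v, e·w) for all v,w ∈ V. Set m := dim Ker(e). Then there exist vectors w₁,…,w_m ∈ V and integers d₁,…,d_m ≥ 0 such that e^{d_i+1}·w_i = 0, the vectors {e^s·w_i : 1 ≤ i ≤ m, 0 ≤ s ≤ d_i} form a basis of V, and there is a fixed-point-free involution i ↦ i* of {1,…,m} such that d_i = d_{i*} and B(w_i, e^s·w_j) ≠ 0 only if (j,s) = (i*, d_i); moreover B(w_i, e^{d_i}·w_{i*}) ≠ 0. -/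

import Mathlib

open Module

section Helpers

universe u v

variable {k : Type u} {V : Type v} [Field k] [AddCommGroup V] [Module k V]

lemma bpow_comm (B : V →ₗ[k] V →ₗ[k] k) (e : Module.End k V)
    (he : ∀ v w : V, B (e v) w = B v (e w)) (s : ℕ) (v w : V) :
    B ((e ^ s) v) w = B v ((e ^ s) w) := by
  induction s generalizing v w with
  | zero => simp
  | succ n ih =>
    have h1 : (e ^ (n + 1)) v = (e ^ n) (e v) := by rw [pow_succ]; rfl
    have h2 : (e ^ (n + 1)) w = e ((e ^ n) w) := by rw [pow_succ']; rfl
    rw [h1, h2, ih (e v) w, he]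

lemma bskew [CharZero k] (B : V →ₗ[k] V →ₗ[k] k)
    (hBalt : ∀ v w : V, B w v = -B v w) (e : Module.End k V)
    (he : ∀ v w : V, B (e v) w = B v (e w)) (s : ℕ) (v : V) :
    B v ((e ^ s) v) = 0 := by
  have h1 : B ((e ^ s) v) v = B v ((e ^ s) v) := bpow_comm B e he s v v
  have h2 : B ((e ^ s) v) v = -B v ((e ^ s) v) := hBalt v ((e ^ s) v)
  have h3 : (2 : k) * B v ((e ^ s) v) = 0 := by linear_combination h2 - h1
  rcases mul_eq_zero.mp h3 with h | h
  · exact absurd h two_ne_zero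
  · exact h

/-- flip version: `B w (e^s v) = - B v (e^s w)`. -/
lemma bflip (B : V →ₗ[k] V →ₗ[k] k)
    (hBalt : ∀ v w : V, B w v = -B v w) (e : Module.End k V)
    (he : ∀ v w : V, B (e v) w = B v (e w)) (s : ℕ) (v w : V) :
    B w ((e ^ s) v) = -B v ((e ^ s) w) := by
  rw [← bpow_comm B e he s v w, hBalt]

end Helpers

section Pair

universe u v

variable {k : Type u} {V : Type v} [Field k] [CharZero k] [AddCommGroup V] [Module k V]

/-- Coefficients normalizing a cyclic pairing: triangular recursion. -/
noncomputable def adjCoeff (a : ℕ → k) (d : ℕ) : ℕ → k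
  | 0 => 1
  | r + 1 => -∑ t ∈ (Finset.range (r + 1)).attach,
      adjCoeff a d t.1 * a (d - (r + 1) + t.1)
termination_by r => r
decreasing_by exact Finset.mem_range.mp t.2

lemma adjCoeff_succ (a : ℕ → k) (d r : ℕ) :
    adjCoeff a d (r + 1) = -∑ t ∈ Finset.range (r + 1), adjCoeff a d t * a (d - (r + 1) + t) := by
  rw [adjCoeff]
  congr 1
  exact Finset.sum_attach (Finset.range (r + 1)) (fun t => adjCoeff a d t * a (d - (r + 1) + t))

lemma epow_eq_zero_of_le (e : Module.End k V) {N : ℕ} (hN : e ^ N = 0) {s : ℕ} (hs : N ≤ s) :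
    (e ^ s : Module.End k V) = 0 := by
  obtain ⟨t, rfl⟩ := Nat.exists_eq_add_of_le hs
  rw [pow_add, hN, zero_mul]

lemma exists_adapted_pair (B : V →ₗ[k] V →ₗ[k] k)
    (hBnd : ∀ v : V, (∀ w : V, B v w = 0) → v = 0)
    (e : Module.End k V)
    (he : ∀ v w : V, B (e v) w = B v (e w))
    (d : ℕ) (hd1 : e ^ (d + 1) = 0) (hdne : e ^ d ≠ 0) :
    ∃ w1 w2 : V, ∀ a b : ℕ, B ((e ^ a) w1) ((e ^ b) w2) = if a + b = d then 1 else 0 := by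
  -- pick w1 with e^d w1 ≠ 0
  obtain ⟨w1, hw1⟩ : ∃ v : V, (e ^ d) v ≠ 0 := by
    by_contra h
    push_neg at h
    exact hdne (LinearMap.ext h)
  -- pick u pairing nontrivially with e^d w1
  obtain ⟨u0, hu0⟩ : ∃ u : V, B ((e ^ d) w1) u ≠ 0 := by
    by_contra h
    push_neg at h
    exact hw1 (hBnd _ h)
  set c : k := B ((e ^ d) w1) u0 with hc
  set u : V := c⁻¹ • u0 with hu
  set a : ℕ → k := fun s => B w1 ((e ^ s) u) with ha
  have had : a d = 1 := by
    simp only [ha, hu, map_smul, smul_eq_mul, ← bpow_comm B e he d w1 u0]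
    field_simp
    rfl
  have hagt : ∀ s, d < s → a s = 0 := by
    intro s hs
    have : (e ^ s : Module.End k V) = 0 := epow_eq_zero_of_le e hd1 (by omega)
    simp [ha, this]
  set q : ℕ → k := adjCoeff a d with hq
  refine ⟨w1, ∑ t ∈ Finset.range (d + 1), q t • (e ^ t) u, ?_⟩
  -- first: the normalized values
  have key : ∀ s : ℕ, s ≤ d →
      B w1 ((e ^ s) (∑ t ∈ Finset.range (d + 1), q t • (e ^ t) u)) = if s = d then 1 else 0 := by
    intro s hs
    have hexp : B w1 ((e ^ s) (∑ t ∈ Finset.range (d + 1), q t • (e ^ t) u))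
        = ∑ t ∈ Finset.range (d + 1), q t * a (s + t) := by
      rw [map_sum, map_sum]
      refine Finset.sum_congr rfl fun t _ => ?_
      have : (e ^ s) ((e ^ t) u) = (e ^ (s + t)) u := by
        rw [pow_add]; rfl
      rw [map_smul, this, map_smul, smul_eq_mul]
    rw [hexp]
    obtain ⟨r, hsr'⟩ : ∃ r, s + r = d := ⟨d - s, by omega⟩
    have hrd : r ≤ d := by omega
    -- terms with t > r vanish
    have hsub : ∑ t ∈ Finset.range (d + 1), q t * a (s + t)
        = ∑ t ∈ Finset.range (r + 1), q t * a (s + t) := by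
      refine (Finset.sum_subset (Finset.range_subset_range.mpr (by omega)) ?_).symm
      intro t ht htn
      have : d < s + t := by
        simp only [Finset.mem_range] at ht htn
        omega
      rw [hagt _ this, mul_zero]
    rw [hsub, Finset.sum_range_succ]
    rcases Nat.eq_zero_or_pos r with h0 | hpos
    · subst h0
      simp only [Finset.range_zero, Finset.sum_empty, zero_add, hsr']
      have : s = d := by omega
      rw [if_pos this, had]
      simp [hq, adjCoeff]
    · obtain ⟨r', rfl⟩ : ∃ r', r = r' + 1 := ⟨r - 1, by omega⟩
      have hqr : q (r' + 1) = -∑ t ∈ Finset.range (r' + 1), q t * a (d - (r' + 1) + t) :=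
        adjCoeff_succ a d r'
      have hse : ∀ t, s + t = d - (r' + 1) + t := by intro t; omega
      have : ∑ t ∈ Finset.range (r' + 1), q t * a (s + t)
          = ∑ t ∈ Finset.range (r' + 1), q t * a (d - (r' + 1) + t) := by
        refine Finset.sum_congr rfl fun t _ => by rw [hse]
      rw [this, hsr', had, mul_one, hqr]
      have : s ≠ d := by omega
      rw [if_neg this]
      ring
  -- now the general statement
  intro A b2
  have hab : B ((e ^ A) w1) ((e ^ b2) (∑ t ∈ Finset.range (d + 1), q t • (e ^ t) u))
      = B w1 ((e ^ (A + b2)) (∑ t ∈ Finset.range (d + 1), q t • (e ^ t) u)) := by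
    rw [bpow_comm B e he A]
    congr 1
    rw [pow_add]; rfl
  rw [hab]
  rcases le_or_gt (A + b2) d with hle | hlt
  · rw [key _ hle]
  · have h0 : (e ^ (A + b2) : Module.End k V) = 0 := epow_eq_zero_of_le e hd1 (by omega)
    rw [h0]
    simp only [LinearMap.zero_apply, map_zero]
    rw [if_neg (by omega)]

end Pair

section Kernel

universe u v

variable {k : Type u} {V : Type v} [Field k] [AddCommGroup V] [Module k V] [FiniteDimensional k V]

set_option linter.unusedSectionVars false

lemma card_eq_finrank_ker (e : Module.End k V) {ι : Type} [Fintype ι]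
    (w : ι → V) (d : ι → ℕ)
    (htop : ∀ i, (e ^ (d i + 1)) (w i) = 0)
    (hind : LinearIndependent k (fun p : Σ i : ι, Fin (d i + 1) => (e ^ (p.2 : ℕ)) (w p.1)))
    (hspan : Submodule.span k
      (Set.range fun p : Σ i : ι, Fin (d i + 1) => (e ^ (p.2 : ℕ)) (w p.1)) = ⊤) :
    Fintype.card ι = finrank k ↥(LinearMap.ker e) := by
  classical
  set F : (Σ i : ι, Fin (d i + 1)) → V := fun p => (e ^ (p.2 : ℕ)) (w p.1) with hF
  set G : ι → V := fun i => (e ^ (d i)) (w i) with hG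
  have hGind : LinearIndependent k G := by
    have : G = F ∘ (fun i => (⟨i, Fin.last (d i)⟩ : Σ i : ι, Fin (d i + 1))) := by
      funext i; simp [hF, hG]
    rw [this]
    exact hind.comp _ (fun a b h => congrArg Sigma.fst h)
  have hGker : ∀ i, G i ∈ LinearMap.ker e := by
    intro i
    rw [LinearMap.mem_ker]
    have h1 : e ((e ^ (d i)) (w i)) = (e ^ (d i + 1)) (w i) := by rw [pow_succ']; rfl
    rw [hG]
    simp only []
    rw [h1]
    exact htop i
  have hspanG : Submodule.span k (Set.range G) = LinearMap.ker e := by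
    apply le_antisymm
    · rw [Submodule.span_le]; rintro _ ⟨i, rfl⟩; exact hGker i
    · intro v hv
      have hvF : v ∈ Submodule.span k (Set.range F) := by rw [hspan]; exact Submodule.mem_top
      obtain ⟨c, hc⟩ := (Submodule.mem_span_range_iff_exists_fun k).mp hvF
      set cc : ι → ℕ → k := fun i s => if h : s < d i + 1 then c ⟨i, ⟨s, h⟩⟩ else 0 with hcc
      -- rewrite the sum as a double sum over ranges
      have hsplit : ∀ (g : ι → ℕ → k),
          ∑ q : Σ i : ι, Fin (d i + 1), g q.1 (q.2 : ℕ) • F q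
            = ∑ i : ι, ∑ s ∈ Finset.range (d i + 1), g i s • (e ^ s) (w i) := by
        intro g
        rw [← Finset.univ_sigma_univ, Finset.sum_sigma]
        refine Finset.sum_congr rfl fun i _ => ?_
        rw [← Fin.sum_univ_eq_sum_range (fun s => g i s • (e ^ s) (w i)) (d i + 1)]
      have hceq : ∀ q : Σ i : ι, Fin (d i + 1), c q = cc q.1 (q.2 : ℕ) := by
        rintro ⟨i, s⟩
        simp [hcc, s.isLt]
        intro h; exact absurd h (Nat.not_lt.mpr (Fin.is_le s))
      have hc' : ∑ i : ι, ∑ s ∈ Finset.range (d i + 1), cc i s • (e ^ s) (w i) = v := by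
        rw [← hsplit cc, ← hc]
        exact Finset.sum_congr rfl fun q _ => by rw [hceq q]
      have hev : ∑ i : ι, ∑ s ∈ Finset.range (d i), cc i s • (e ^ (s + 1)) (w i) = 0 := by
        have h1 : e v = 0 := LinearMap.mem_ker.mp hv
        have h2 : e v = ∑ i : ι, ∑ s ∈ Finset.range (d i + 1), cc i s • (e ^ (s + 1)) (w i) := by
          rw [← hc', map_sum]
          refine Finset.sum_congr rfl fun i _ => ?_
          rw [map_sum]
          refine Finset.sum_congr rfl fun s _ => ?_
          rw [map_smul]
          congr 1
          rw [pow_succ']; rfl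
        have h3 : ∀ i : ι, ∑ s ∈ Finset.range (d i + 1), cc i s • (e ^ (s + 1)) (w i)
            = ∑ s ∈ Finset.range (d i), cc i s • (e ^ (s + 1)) (w i) := by
          intro i
          rw [Finset.sum_range_succ, htop i, smul_zero, add_zero]
        rw [← Finset.sum_congr rfl fun i _ => h3 i, ← h2, h1]
      -- coefficients of the shifted family
      set gg : (Σ i : ι, Fin (d i + 1)) → k :=
        fun q => if (q.2 : ℕ) = 0 then 0 else cc q.1 ((q.2 : ℕ) - 1) with hgg
      have hggsum : ∑ q : Σ i : ι, Fin (d i + 1), gg q • F q = 0 := by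
        have : ∑ q : Σ i : ι, Fin (d i + 1), gg q • F q
            = ∑ i : ι, ∑ s ∈ Finset.range (d i + 1),
                (if s = 0 then 0 else cc i (s - 1)) • (e ^ s) (w i) :=
          hsplit (fun i s => if s = 0 then 0 else cc i (s - 1))
        rw [this, ← hev]
        refine Finset.sum_congr rfl fun i _ => ?_
        rw [Finset.sum_range_succ']
        simp only [Nat.succ_ne_zero, if_false, Nat.add_sub_cancel, if_pos rfl, if_true, zero_smul, add_zero,
          Nat.succ_sub_one]
      have hgg0 : ∀ q, gg q = 0 := Fintype.linearIndependent_iff.mp hind gg hggsum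
      have hcc0 : ∀ i, ∀ s, s < d i → cc i s = 0 := by
        intro i s hs
        have := hgg0 ⟨i, ⟨s + 1, by omega⟩⟩
        simpa [hgg] using this
      have hvG : v = ∑ i : ι, cc i (d i) • G i := by
        rw [← hc']
        refine Finset.sum_congr rfl fun i _ => ?_
        rw [Finset.sum_range_succ,
          Finset.sum_eq_zero (fun s hs => by rw [hcc0 i s (Finset.mem_range.mp hs), zero_smul]),
          zero_add]
      rw [hvG]
      exact Submodule.sum_mem _ fun i _ =>
        Submodule.smul_mem _ _ (Submodule.subset_span ⟨i, rfl⟩)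
  have := finrank_span_eq_card (R := k) hGind
  rw [hspanG] at this
  exact this.symm

end Kernel

section MainInduction

universe u v

variable {k : Type u} [Field k] [CharZero k]

/-- The conclusion of the adapted-basis theorem, with an abstract index type. -/
def Concl (k : Type u) {V : Type v} [Field k] [AddCommGroup V] [Module k V]
    (B : V →ₗ[k] V →ₗ[k] k) (e : Module.End k V) : Prop :=
  ∃ (ι : Type) (_ : Fintype ι) (w : ι → V) (d : ι → ℕ) (inv : ι → ι),
    (∀ i, (e ^ (d i + 1)) (w i) = 0) ∧
    LinearIndependent k (fun p : Σ i : ι, Fin (d i + 1) => (e ^ (p.2 : ℕ)) (w p.1)) ∧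
    Submodule.span k
      (Set.range fun p : Σ i : ι, Fin (d i + 1) => (e ^ (p.2 : ℕ)) (w p.1)) = ⊤ ∧
    (∀ i, inv (inv i) = i) ∧ (∀ i, inv i ≠ i) ∧ (∀ i, d (inv i) = d i) ∧
    (∀ i j s, s ≤ d j → B (w i) ((e ^ s) (w j)) ≠ 0 → j = inv i ∧ s = d i) ∧
    (∀ i, B (w i) ((e ^ (d i)) (w (inv i))) ≠ 0)

lemma concl_trivial {V : Type v} [AddCommGroup V] [Module k V] [FiniteDimensional k V]
    (B : V →ₗ[k] V →ₗ[k] k) (e : Module.End k V) (h : finrank k V = 0) :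
    Concl k B e := by
  have hsub : Subsingleton V := finrank_zero_iff.mp h
  refine ⟨Empty, inferInstance, fun i => i.elim, fun i => i.elim, fun i => i.elim,
    fun i => i.elim, ?_, ?_, fun i => i.elim, fun i => i.elim, fun i => i.elim,
    fun i => i.elim, fun i => i.elim⟩
  · have : IsEmpty (Σ i : Empty, Fin (Empty.elim i + 1)) := ⟨fun p => p.1.elim⟩
    exact linearIndependent_empty_type
  · exact Subsingleton.elim _ _

theorem aux (n : ℕ) : ∀ {V : Type v} [AddCommGroup V] [Module k V] [FiniteDimensional k V]
    (B : V →ₗ[k] V →ₗ[k] k), (∀ v : V, (∀ w : V, B v w = 0) → v = 0) →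
    (∀ v w : V, B w v = -B v w) →
    ∀ (e : Module.End k V), IsNilpotent e → (∀ v w : V, B (e v) w = B v (e w)) →
    finrank k V ≤ n → Concl k B e := by
  induction n with
  | zero =>
    intro V _ _ _ B hBnd hBalt e hnil he hdim
    exact concl_trivial B e (by omega)
  | succ n IH =>
    intro V _ _ _ B hBnd hBalt e hnil he hdim
    rcases subsingleton_or_nontrivial V with hV | hV
    · exact concl_trivial B e (by
        have : finrank k V = 0 := finrank_zero_iff.mpr hV
        omega)
    · -- nontrivial case
      classical
      obtain ⟨vne, hvne⟩ := exists_ne (0 : V)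
      obtain ⟨N, hN⟩ := hnil
      have hPex : ∃ m, e ^ m = 0 := ⟨N, hN⟩
      have hfind_pos : 0 < Nat.find hPex := by
        rcases Nat.eq_zero_or_pos (Nat.find hPex) with h0 | h
        · exfalso
          have := Nat.find_spec hPex
          rw [h0, pow_zero] at this
          have : vne = 0 := by
            calc vne = (1 : Module.End k V) vne := rfl
            _ = (0 : Module.End k V) vne := by rw [this]
            _ = 0 := rfl
          exact hvne this
        · exact h
      set d : ℕ := Nat.find hPex - 1 with hd
      have hd1 : e ^ (d + 1) = 0 := by
        have : d + 1 = Nat.find hPex := by omega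
        rw [this]; exact Nat.find_spec hPex
      have hdne : e ^ d ≠ 0 := Nat.find_min hPex (by omega)
      obtain ⟨w1, w2, hGram⟩ := exists_adapted_pair B hBnd e he d hd1 hdne
      -- merging exponents
      have hmerge : ∀ (s t : ℕ) (v w : V),
          B ((e ^ s) v) ((e ^ t) w) = B v ((e ^ (s + t)) w) := by
        intro s t v w
        rw [bpow_comm B e he s]
        congr 1
        rw [pow_add]; rfl
      set wB : Bool → V := fun b => cond b w2 w1 with hwB
      have hpair : ∀ (b c : Bool) (s t : ℕ),
          B ((e ^ s) (wB b)) ((e ^ t) (wB c))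
            = if c = !b ∧ s + t = d then cond b (-1 : k) 1 else 0 := by
        intro b c s t
        have hG0 : ∀ m : ℕ, B w1 ((e ^ m) w2) = if m = d then 1 else 0 := by
          intro m
          have := hGram 0 m
          rwa [pow_zero, Module.End.one_apply, zero_add] at this
        cases b <;> cases c <;>
          simp only [hwB, cond_true, cond_false, Bool.not_false, Bool.not_true, hmerge]
        · rw [bskew B hBalt e he]
          simp
        · rw [hG0]
          by_cases h : s + t = d <;> simp [h]
        · rw [bflip B hBalt e he, hG0]
          by_cases h : s + t = d <;> simp [h]
        · rw [bskew B hBalt e he]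
          simp
      set F : Bool × Fin (d + 1) → V := fun q => (e ^ (q.2 : ℕ)) (wB q.1) with hF
      -- the key pairing computation
      have hkey : ∀ (cf : Bool × Fin (d + 1) → k) (v : V),
          (∑ q : Bool × Fin (d + 1), cf q • F q = v) →
          ∀ (b : Bool) (t : Fin (d + 1)),
            B ((e ^ (d - (t : ℕ))) (wB (!b))) v = cond b (1 : k) (-1) * cf (b, t) := by
        intro cf v hv b t
        have hexp : B ((e ^ (d - (t : ℕ))) (wB (!b))) v
            = ∑ q : Bool × Fin (d + 1), cf q * B ((e ^ (d - (t : ℕ))) (wB (!b))) (F q) := by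
          rw [← hv, map_sum]
          exact Finset.sum_congr rfl fun q _ => by rw [map_smul, smul_eq_mul]
        rw [hexp, Finset.sum_eq_single (b, t)]
        · rw [hF]
          simp only []
          rw [hpair (!b) b (d - (t : ℕ)) (t : ℕ)]
          have ht : (t : ℕ) < d + 1 := t.isLt
          rw [if_pos ⟨(Bool.not_not b).symm, by omega⟩]
          cases b <;> simp [mul_comm]
        · rintro ⟨c, s⟩ _ hne
          rw [hF]
          simp only []
          rw [hpair (!b) c (d - (t : ℕ)) (s : ℕ)]
          have ht : (t : ℕ) < d + 1 := t.isLt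
          have hs : (s : ℕ) < d + 1 := s.isLt
          rw [if_neg, mul_zero]
          rintro ⟨hc, hst⟩
          apply hne
          have hcb : c = b := by rw [hc, Bool.not_not]
          have hts : s = t := Fin.ext (by omega)
          rw [hcb, hts]
        · intro h
          exact absurd (Finset.mem_univ _) h
      have hFind : LinearIndependent k F := by
        rw [Fintype.linearIndependent_iff]
        intro cf hcf q
        obtain ⟨b, t⟩ := q
        have h1 := hkey cf 0 hcf b t
        rw [map_zero] at h1
        cases b <;> simp only [cond_true, cond_false, one_mul, neg_mul] at h1
        · exact (neg_eq_zero.mp h1.symm)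
        · exact h1.symm
      set U : Submodule k V := Submodule.span k (Set.range F) with hU
      have hFU : ∀ q, F q ∈ U := fun q => Submodule.subset_span ⟨q, rfl⟩
      have hUe : ∀ x ∈ U, e x ∈ U := by
        have hmap : Submodule.map e U ≤ U := by
          rw [hU, Submodule.map_span, Submodule.span_le]
          rintro _ ⟨_, ⟨⟨b, s⟩, rfl⟩, rfl⟩
          have h1 : e (F (b, s)) = (e ^ ((s : ℕ) + 1)) (wB b) := by
            rw [hF]
            simp only []
            rw [pow_succ']; rfl
          rcases lt_or_eq_of_le (Nat.lt_succ_iff.mp s.isLt) with hlt | heq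
          · have : e (F (b, s)) = F (b, ⟨(s : ℕ) + 1, by omega⟩) := h1
            rw [this]
            exact hFU _
          · rw [h1, heq, hd1]
            exact Submodule.zero_mem _
        intro x hx
        exact hmap ⟨x, hx, rfl⟩
      set φ : V →ₗ[k] (Bool × Fin (d + 1) → k) :=
        LinearMap.pi (fun q : Bool × Fin (d + 1) => B (F q)) with hφ
      set W : Submodule k V := LinearMap.ker φ with hW
      have hWmem : ∀ x : V, x ∈ W ↔ ∀ q, B (F q) x = 0 := by
        intro x
        rw [hW, LinearMap.mem_ker, hφ]
        constructor
        · intro h q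
          have := congrFun (congrArg (fun f => (f : (Bool × Fin (d+1)) → k)) h) q
          simpa using this
        · intro h
          ext q
          simpa using h q
      have hUW : ∀ u ∈ U, ∀ x ∈ W, B u x = 0 := by
        intro u hu x hx
        have hle : U ≤ LinearMap.ker (B.flip x) := by
          rw [hU, Submodule.span_le]
          rintro _ ⟨q, rfl⟩
          rw [SetLike.mem_coe, LinearMap.mem_ker, LinearMap.flip_apply]
          exact (hWmem x).mp hx q
        have := hle hu
        rwa [LinearMap.mem_ker, LinearMap.flip_apply] at this
      have hWe : ∀ x ∈ W, e x ∈ W := by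
        intro x hx
        rw [hWmem]
        intro q
        rw [← he (F q) x]
        exact hUW _ (hUe _ (hFU q)) x hx
      have hdisj : U ⊓ W = ⊥ := by
        rw [eq_bot_iff]
        rintro v ⟨hvU, hvW⟩
        obtain ⟨cf, hcf⟩ := (Submodule.mem_span_range_iff_exists_fun k).mp hvU
        have hz : ∀ b (t : Fin (d + 1)), cf (b, t) = 0 := by
          intro b t
          have h1 := hkey cf v hcf b t
          have h2 : B ((e ^ (d - (t : ℕ))) (wB (!b))) v = 0 := by
            have heqF : (e ^ (d - (t : ℕ))) (wB (!b)) = F (!b, ⟨d - (t : ℕ), by omega⟩) := rfl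
            rw [heqF]
            exact (hWmem v).mp hvW _
          rw [h2] at h1
          cases b <;> simp only [cond_true, cond_false, one_mul, neg_mul] at h1
          · exact neg_eq_zero.mp h1.symm
          · exact h1.symm
        have hv0 : v = 0 := by
          rw [← hcf]
          refine Finset.sum_eq_zero fun q _ => ?_
          obtain ⟨b, t⟩ := q
          rw [hz b t, zero_smul]
        simp [hv0]
      -- dimension counting
      have hUrank : finrank k ↥U = 2 * (d + 1) := by
        rw [hU, finrank_span_eq_card hFind]
        simp [two_mul]
      have hWrank : finrank k V ≤ 2 * (d + 1) + finrank k ↥W := by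
        have h1 := LinearMap.finrank_range_add_finrank_ker φ
        have h2 : finrank k ↥(LinearMap.range φ) ≤ 2 * (d + 1) := by
          have h3 := Submodule.finrank_le (LinearMap.range φ)
          have h4 : finrank k (Bool × Fin (d + 1) → k) = 2 * (d + 1) := by
            rw [Module.finrank_fintype_fun_eq_card]
            simp [two_mul]
          omega
        rw [← hW] at h1
        omega
      have hsupinf := Submodule.finrank_sup_add_finrank_inf_eq U W
      rw [hdisj, finrank_bot, add_zero] at hsupinf
      have hsuple := Submodule.finrank_le (U ⊔ W)
      have hsup : U ⊔ W = ⊤ := by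
        apply Submodule.eq_top_of_finrank_eq
        omega
      have hdimeq : finrank k ↥U + finrank k ↥W = finrank k V := by
        rw [← hsupinf, hsup, finrank_top]
      have hWn : finrank k ↥W ≤ n := by omega
      -- restrict everything to W
      set eW : Module.End k ↥W := e.restrict hWe with heWdef
      set BW : ↥W →ₗ[k] ↥W →ₗ[k] k := LinearMap.compl₁₂ B W.subtype W.subtype with hBWdef
      have hBW : ∀ x y : ↥W, BW x y = B (x : V) (y : V) := fun x y => rfl
      have hcoe1 : ∀ x : ↥W, ((eW x : ↥W) : V) = e (x : V) := fun x => rfl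
      have hcoe : ∀ (s : ℕ) (x : ↥W), (((eW ^ s) x : ↥W) : V) = (e ^ s) (x : V) := by
        intro s x
        rw [heWdef, Module.End.pow_restrict s hWe]
        rfl
      have hBndW : ∀ x : ↥W, (∀ y : ↥W, BW x y = 0) → x = 0 := by
        intro x hx
        apply Subtype.ext
        apply hBnd
        intro z
        have hz : z ∈ U ⊔ W := by rw [hsup]; exact Submodule.mem_top
        obtain ⟨u, hu, y, hy, rfl⟩ := Submodule.mem_sup.mp hz
        rw [map_add]
        have h1 : B (x : V) u = 0 := by
          rw [hBalt u (x : V)]  -- maybe wrong direction; we need B x u = -B u x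
          rw [hUW u hu (x : V) x.2, neg_zero]
        have h2 : B (x : V) y = 0 := hx ⟨y, hy⟩
        rw [h1, h2, add_zero]
      have hBaltW : ∀ x y : ↥W, BW y x = -BW x y := fun x y => hBalt (x : V) (y : V)
      have hnilW : IsNilpotent eW := by
        refine ⟨d + 1, ?_⟩
        ext x
        have : (((eW ^ (d + 1)) x : ↥W) : V) = (e ^ (d + 1)) (x : V) := hcoe (d + 1) x
        rw [hd1] at this
        simpa using this
      have heW : ∀ x y : ↥W, BW (eW x) y = BW x (eW y) := fun x y => he (x : V) (y : V)
      obtain ⟨ι', instFT', w', d', inv', h1', h2', h3', h4', h5', h6', h7', h8'⟩ :=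
        IH BW hBndW hBaltW eW hnilW heW hWn
      -- the two halves of the prospective basis, as sigma-indexed families
      set FS : (Σ _ : Bool, Fin (d + 1)) → V := fun p => F (p.1, p.2) with hFS
      set GW : (Σ i : ι', Fin (d' i + 1)) → V :=
        fun p => ((eW ^ (p.2 : ℕ)) (w' p.1) : V) with hGWd
      have hFSind : LinearIndependent k FS := by
        have h0 : FS = F ∘ (Equiv.sigmaEquivProd Bool (Fin (d + 1))) := by funext p; rfl
        rw [h0]
        exact hFind.comp _ (Equiv.injective _)
      have hFSspan : Submodule.span k (Set.range FS) = U := by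
        rw [hU]
        congr 1
        have h0 : FS = F ∘ (Equiv.sigmaEquivProd Bool (Fin (d + 1))) := by funext p; rfl
        rw [h0]
        exact (Equiv.surjective _).range_comp F
      have hGWind : LinearIndependent k GW := by
        have h0 : GW = (W.subtype : ↥W →ₗ[k] V) ∘
            (fun p : Σ i : ι', Fin (d' i + 1) => (eW ^ (p.2 : ℕ)) (w' p.1)) := rfl
        rw [h0]
        exact h2'.map' _ (Submodule.ker_subtype W)
      have hGWspan : Submodule.span k (Set.range GW) = W := by
        have h0 : Set.range GW = (W.subtype : ↥W →ₗ[k] V) ''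
            Set.range (fun p : Σ i : ι', Fin (d' i + 1) => (eW ^ (p.2 : ℕ)) (w' p.1)) := by
          rw [← Set.range_comp]; rfl
        rw [h0, ← Submodule.map_span, h3', Submodule.map_subtype_top]
      have hsum_ind : LinearIndependent k (Sum.elim FS GW) :=
        hFSind.sum_type hGWind (by rw [hFSspan, hGWspan]; exact disjoint_iff.mpr hdisj)
      let Ee : ((Σ _ : Bool, Fin (d + 1)) ⊕ (Σ i : ι', Fin (d' i + 1))) ≃
          (Σ i : Bool ⊕ ι', Fin (Sum.elim (fun _ => d) d' i + 1)) :=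
        { toFun := Sum.elim (fun p => ⟨Sum.inl p.1, p.2⟩) (fun p => ⟨Sum.inr p.1, p.2⟩)
          invFun := fun p => match p with
            | ⟨Sum.inl b, s⟩ => Sum.inl ⟨b, s⟩
            | ⟨Sum.inr i, s⟩ => Sum.inr ⟨i, s⟩
          left_inv := by rintro (⟨b, s⟩ | ⟨i, s⟩) <;> rfl
          right_inv := by rintro ⟨b | i, s⟩ <;> rfl }
      have hfun : (fun p : Σ i : Bool ⊕ ι', Fin (Sum.elim (fun _ => d) d' i + 1) =>
            (e ^ ((p.2 : ℕ))) (Sum.elim wB (fun i => (w' i : V)) p.1))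
          = Sum.elim FS GW ∘ ⇑Ee.symm := by
        funext p
        obtain ⟨b | i, s⟩ := p
        · rfl
        · exact (hcoe (s : ℕ) (w' i)).symm
      -- assemble
      refine ⟨Bool ⊕ ι', inferInstance,
        Sum.elim wB (fun i => (w' i : V)),
        Sum.elim (fun _ => d) d',
        Sum.elim (fun b => Sum.inl (!b)) (fun i => Sum.inr (inv' i)),
        ?_, ?_, ?_, ?_, ?_, ?_, ?_, ?_⟩
      · rintro (b | i)
        · show (e ^ (d + 1)) (wB b) = 0
          rw [hd1]; rfl
        · show (e ^ (d' i + 1)) ((w' i : V)) = 0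
          rw [← hcoe, h1' i]; rfl
      · have hind2 := hsum_ind.comp ⇑Ee.symm Ee.symm.injective
        rw [← hfun] at hind2
        exact hind2
      · have hrange : Set.range (fun p : Σ i : Bool ⊕ ι', Fin (Sum.elim (fun _ => d) d' i + 1) =>
            (e ^ ((p.2 : ℕ))) (Sum.elim wB (fun i => (w' i : V)) p.1))
            = Set.range (Sum.elim FS GW) := by
          rw [hfun]
          exact Ee.symm.surjective.range_comp _
        rw [hrange, Set.Sum.elim_range, Submodule.span_union, hFSspan, hGWspan]
        exact hsup
      · rintro (b | i)
        · show (Sum.inl (!!b) : Bool ⊕ ι') = Sum.inl b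
          rw [Bool.not_not]
        · show (Sum.inr (inv' (inv' i)) : Bool ⊕ ι') = Sum.inr i
          rw [h4' i]
      · rintro (b | i)
        · intro h
          simp only [Sum.elim_inl, Sum.inl.injEq] at h
          exact absurd h (by cases b <;> simp)
        · intro h
          simp only [Sum.elim_inr, Sum.inr.injEq] at h
          exact (h5' i) h
      · rintro (b | i)
        · rfl
        · exact h6' i
      · rintro (i | i) (j | j) s hs hne
        · -- Bool-Bool
          have h1 := hpair i j 0 s
          rw [pow_zero, Module.End.one_apply, zero_add] at h1
          change B (wB i) ((e ^ s) (wB j)) ≠ 0 at hne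
          rw [h1] at hne
          by_cases hcond : j = !i ∧ s = d
          · exact ⟨by rw [hcond.1]; rfl, hcond.2⟩
          · rw [if_neg hcond] at hne
            exact absurd rfl hne
        · -- Bool - ι'
          exfalso
          apply hne
          show B (wB i) ((e ^ s) ((w' j : V))) = 0
          rw [← hcoe]
          have hFi : wB i = F (i, ⟨0, by omega⟩) := by
            rw [hF]; simp
          rw [hFi]
          exact (hWmem _).mp ((eW ^ s) (w' j)).2 _
        · -- ι' - Bool
          exfalso
          apply hne
          show B ((w' i : V)) ((e ^ s) (wB j)) = 0
          have hs' : s ≤ d := hs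
          have hs'' : s < d + 1 := by omega
          have hFj : (e ^ s) (wB j) = F (j, ⟨s, hs''⟩) := rfl
          rw [hFj]
          have h0 := hUW _ (hFU (j, ⟨s, hs''⟩)) _ (w' i).2
          rw [hBalt (F (j, ⟨s, hs''⟩)) ((w' i : V)), h0, neg_zero]
        · -- ι' - ι'
          have hne' : BW (w' i) ((eW ^ s) (w' j)) ≠ 0 := by
            rw [hBW, hcoe]
            exact hne
          obtain ⟨hj, hsd⟩ := h7' i j s hs hne'
          exact ⟨by rw [hj]; rfl, hsd⟩
      · rintro (b | i)
        · cases b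
          · show B (wB false) ((e ^ d) (wB true)) ≠ 0
            have h1 := hpair false true 0 d
            rw [pow_zero, Module.End.one_apply, zero_add] at h1
            rw [h1, if_pos ⟨rfl, rfl⟩]
            simp
          · show B (wB true) ((e ^ d) (wB false)) ≠ 0
            have h1 := hpair true false 0 d
            rw [pow_zero, Module.End.one_apply, zero_add] at h1
            rw [h1, if_pos ⟨rfl, rfl⟩]
            simp
        · show B ((w' i : V)) ((e ^ (d' i)) ((w' (inv' i) : V))) ≠ 0
          rw [← hcoe]
          exact h8' i

end MainInduction

theorem adapted_cyclic_vectors_symplectic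
    {k V : Type*} [Field k] [IsAlgClosed k] [CharZero k]
    [AddCommGroup V] [Module k V] [FiniteDimensional k V]
    (B : V →ₗ[k] V →ₗ[k] k)
    (hBnd : ∀ v : V, (∀ w : V, B v w = 0) → v = 0)
    (hBalt : ∀ v w : V, B w v = -B v w)
    (e : Module.End k V) (hnil : IsNilpotent e)
    (he : ∀ v w : V, B (e v) w = B v (e w)) :
    ∃ (m : ℕ), m = finrank k ↥(LinearMap.ker e) ∧
    ∃ (w : Fin m → V) (d : Fin m → ℕ) (inv : Fin m → Fin m),
      (∀ i, (e ^ (d i + 1)) (w i) = 0) ∧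
      LinearIndependent k
        (fun p : Σ i : Fin m, Fin (d i + 1) => (e ^ (p.2 : ℕ)) (w p.1)) ∧
      Submodule.span k
        (Set.range fun p : Σ i : Fin m, Fin (d i + 1) => (e ^ (p.2 : ℕ)) (w p.1)) = ⊤ ∧
      (∀ i, inv (inv i) = i) ∧
      (∀ i, inv i ≠ i) ∧
      (∀ i, d (inv i) = d i) ∧
      (∀ i j : Fin m, ∀ s : ℕ, s ≤ d j →
        B (w i) ((e ^ s) (w j)) ≠ 0 → j = inv i ∧ s = d i) ∧
      (∀ i, B (w i) ((e ^ d i) (w (inv i))) ≠ 0) := by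
  classical
  obtain ⟨ι, instFT, w', d', inv', h1, h2, h3, h4, h5, h6, h7, h8⟩ :=
    aux (finrank k V) B hBnd hBalt e hnil he le_rfl
  have hm : Fintype.card ι = finrank k ↥(LinearMap.ker e) :=
    card_eq_finrank_ker e w' d' h1 h2 h3
  refine ⟨finrank k ↥(LinearMap.ker e), rfl, ?_⟩
  set σ : Fin (finrank k ↥(LinearMap.ker e)) ≃ ι := (Fintype.equivFinOfCardEq hm).symm with hσ
  have hEapp : ∀ (p : Σ i : Fin (finrank k ↥(LinearMap.ker e)), Fin (d' (σ i) + 1)),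
      (Equiv.sigmaCongrLeft (β := fun j => Fin (d' j + 1)) σ) p = ⟨σ p.1, p.2⟩ := by
    rintro ⟨i, s⟩
    rfl
  refine ⟨fun i => w' (σ i), fun i => d' (σ i), fun i => σ.symm (inv' (σ i)),
    fun i => h1 (σ i), ?_, ?_, ?_, ?_, ?_, ?_, ?_⟩
  · have hfun : (fun p : Σ i : Fin (finrank k ↥(LinearMap.ker e)), Fin (d' (σ i) + 1) =>
          (e ^ ((p.2 : ℕ))) (w' (σ p.1)))
        = (fun p : Σ j : ι, Fin (d' j + 1) => (e ^ ((p.2 : ℕ))) (w' p.1)) ∘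
          ⇑(Equiv.sigmaCongrLeft (β := fun j => Fin (d' j + 1)) σ) := by
      funext p
      rw [Function.comp_apply, hEapp p]
    rw [hfun]
    exact h2.comp _ (Equiv.injective _)
  · have hfun : (fun p : Σ i : Fin (finrank k ↥(LinearMap.ker e)), Fin (d' (σ i) + 1) =>
          (e ^ ((p.2 : ℕ))) (w' (σ p.1)))
        = (fun p : Σ j : ι, Fin (d' j + 1) => (e ^ ((p.2 : ℕ))) (w' p.1)) ∘
          ⇑(Equiv.sigmaCongrLeft (β := fun j => Fin (d' j + 1)) σ) := by
      funext p
      rw [Function.comp_apply, hEapp p]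
    rw [hfun, (Equiv.surjective _).range_comp]
    exact h3
  · intro i
    show σ.symm (inv' (σ (σ.symm (inv' (σ i))))) = i
    rw [Equiv.apply_symm_apply, h4, Equiv.symm_apply_apply]
  · intro i h
    have h' := congrArg σ h
    rw [Equiv.apply_symm_apply] at h'
    exact h5 (σ i) h'
  · intro i
    show d' (σ (σ.symm (inv' (σ i)))) = d' (σ i)
    rw [Equiv.apply_symm_apply]
    exact h6 (σ i)
  · intro i j s hs hne
    obtain ⟨hj, hsd⟩ := h7 (σ i) (σ j) s hs hne
    refine ⟨?_, hsd⟩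
    rw [← Equiv.symm_apply_apply σ j, hj]
  · intro i
    show B (w' (σ i)) ((e ^ d' (σ i)) (w' (σ (σ.symm (inv' (σ i)))))) ≠ 0
    rw [Equiv.apply_symm_apply]
    exact h8 (σ i)
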